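/- Let N ≥ 1 be an integer, let γ > 0, κ > 0, α > 0, ḡ, σ, a, b be real numbers, and let g_1,…,g_N be square-integrable real random variables on a probability space with E[g_i] = ḡ for all i, E[(g_i − ḡ)²] = 1 for all i, and E[(g_i − ḡ)(g_j − ḡ)] = σ for all i ≠ j. Let ω be any measurable real random variable on the same space. Define s_i = a·(g_i − ḡ) + b·ḡ, L = Σ_{i=1}^N s_i, the aggregate utility U = Σ_{i=1}^N ( −s_i·(γ/N)·(L + ω) + g_i·s_i − α·s_i² ), the net revenue NR = (γ/N)·(L + ω)·L − (κ/N)·L², and the welfare W = U + NR. Then E[W]/N = ( b − (κ+α)·b² )·ḡ² − ( ((N−1)/N)·κ·σ + κ/N + α )·a² + a. -/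

import Mathlib

open MeasureTheory

/-- eq. (42): expected normalized welfare for symmetric BNE strategies
`s_i = a(g_i − ḡ) + bḡ`; the price terms cancel pointwise, so the renewable term `ω`
only needs to be measurable. -/
theorem stmt_17 {Ω : Type*} [MeasurableSpace Ω] (μ : Measure Ω) [IsProbabilityMeasure μ]
    (N : ℕ) (hN : 1 ≤ N) (γ κ α gbar σ a b : ℝ)
    (hγ : 0 < γ) (hκ : 0 < κ) (hα : 0 < α)
    (g : Fin N → Ω → ℝ)
    (hL2 : ∀ i, MemLp (g i) 2 μ)
    (hmean : ∀ i, (∫ x, g i x ∂μ) = gbar)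
    (hvar : ∀ i, (∫ x, (g i x - gbar) ^ 2 ∂μ) = 1)
    (hcov : ∀ i j, i ≠ j → (∫ x, (g i x - gbar) * (g j x - gbar) ∂μ) = σ)
    (ω : Ω → ℝ) (hω : Measurable ω)
    (s : Fin N → Ω → ℝ)
    (hs : ∀ i x, s i x = a * (g i x - gbar) + b * gbar)
    (L : Ω → ℝ) (hL : ∀ x, L x = ∑ i, s i x)
    (U : Ω → ℝ)
    (hU : ∀ x, U x = ∑ i,
      (-(s i x) * (γ / N) * (L x + ω x) + g i x * s i x - α * s i x ^ 2))
    (NR : Ω → ℝ)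
    (hNR : ∀ x, NR x = (γ / N) * (L x + ω x) * L x - (κ / N) * L x ^ 2)
    (W : Ω → ℝ) (hW : ∀ x, W x = U x + NR x) :
    (∫ x, W x ∂μ) / N
      = (b - (κ + α) * b ^ 2) * gbar ^ 2
        - ((((N : ℝ) - 1) / N) * κ * σ + κ / N + α) * a ^ 2 + a := by
  have hNpos : (0:ℝ) < N := by exact_mod_cast hN
  have hNne : (N:ℝ) ≠ 0 := ne_of_gt hNpos
  set h : Fin N → Ω → ℝ := fun i x => g i x - gbar with hh_def
  have hh2 : ∀ i, MemLp (h i) 2 μ := fun i => (hL2 i).sub (memLp_const gbar)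
  have hint_h : ∀ i, Integrable (h i) μ := fun i => (hh2 i).integrable one_le_two
  have hint_hh : ∀ i j, Integrable (fun x => h i x * h j x) μ := by
    intro i j
    have h1 := ((hh2 i).add (hh2 j)).integrable_sq
    have h2 := (hh2 i).integrable_sq
    have h3 := (hh2 j).integrable_sq
    have := ((h1.sub h2).sub h3).div_const 2
    exact this.congr (Filter.Eventually.of_forall fun x => by
      simp only [Pi.sub_apply, Pi.add_apply]; ring)
  have hmean0 : ∀ i, (∫ x, h i x ∂μ) = 0 := by
    intro i
    have : (∫ x, h i x ∂μ) = (∫ x, g i x ∂μ) - (∫ x, (gbar : ℝ) ∂μ) :=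
      integral_sub ((hL2 i).integrable one_le_two) (integrable_const _)
    rw [this, hmean i, integral_const, probReal_univ]
    simp
  have hij : ∀ i j, (∫ x, h i x * h j x ∂μ) = if i = j then 1 else σ := by
    intro i j
    by_cases hd : i = j
    · subst hd
      rw [if_pos rfl]
      simpa [hh_def, pow_two] using hvar i
    · rw [if_neg hd]
      simpa [hh_def] using hcov i j hd
  -- constants
  set A : ℝ := a - α * a ^ 2 with hA
  set B : ℝ := (a + b) * gbar - 2 * α * a * b * gbar - 2 * κ * a * b * gbar with hB
  set C : ℝ := (b - α * b ^ 2 - κ * b ^ 2) * gbar ^ 2 with hC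
  set D : ℝ := -(κ / (N:ℝ)) * a ^ 2 with hD
  -- pointwise identity
  have key : ∀ x, W x
      = (∑ i, (A * (h i x * h i x) + B * h i x + C))
        + D * (∑ i, ∑ j, h i x * h j x) := by
    intro x
    have hSs : ∑ i, s i x = a * (∑ i, h i x) + (N:ℝ) * (b * gbar) := by
      simp only [hs, hh_def]
      rw [Finset.sum_add_distrib, ← Finset.mul_sum, Finset.sum_const, Finset.card_univ,
        Fintype.card_fin, nsmul_eq_mul]
    have hLx : L x = a * (∑ i, h i x) + (N:ℝ) * (b * gbar) := by rw [hL, hSs]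
    have hsq : (∑ i, h i x) * (∑ i, h i x) = ∑ i, ∑ j, h i x * h j x :=
      Finset.sum_mul_sum _ _ _ _
    have hsplit : ∑ i, (-(s i x) * (γ / N) * (L x + ω x) + g i x * s i x - α * s i x ^ 2)
        = -((γ / N) * (L x + ω x)) * (∑ i, s i x)
          + ∑ i, (g i x * s i x - α * s i x ^ 2) := by
      rw [Finset.mul_sum, ← Finset.sum_add_distrib]
      exact Finset.sum_congr rfl fun i _ => by ring
    have hterm : ∀ i, g i x * s i x - α * s i x ^ 2
        = A * (h i x * h i x) + ((a + b) * gbar - 2 * α * a * b * gbar) * h i x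
          + (b - α * b ^ 2) * gbar ^ 2 := by
      intro i
      have hg : g i x = h i x + gbar := by simp [hh_def]
      rw [hs, hg, hA, hh_def]
      ring
    have e1 : ∑ i, (g i x * s i x - α * s i x ^ 2)
        = A * (∑ i, h i x * h i x)
          + ((a + b) * gbar - 2 * α * a * b * gbar) * (∑ i, h i x)
          + (N:ℝ) * ((b - α * b ^ 2) * gbar ^ 2) := by
      rw [Finset.sum_congr rfl fun i _ => hterm i, Finset.sum_add_distrib,
        Finset.sum_add_distrib, ← Finset.mul_sum, ← Finset.mul_sum, Finset.sum_const,
        Finset.card_univ, Fintype.card_fin, nsmul_eq_mul]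
    have e2 : ∑ i, (A * (h i x * h i x) + B * h i x + C)
        = A * (∑ i, h i x * h i x) + B * (∑ i, h i x) + (N:ℝ) * C := by
      rw [Finset.sum_add_distrib, Finset.sum_add_distrib, ← Finset.mul_sum, ← Finset.mul_sum,
        Finset.sum_const, Finset.card_univ, Fintype.card_fin, nsmul_eq_mul]
    rw [hW, hU, hNR, hsplit, ← hL, e1, e2, hLx, ← hsq]
    rw [hB, hC, hD]
    field_simp
    ring
  -- integrate
  have int_inner : ∀ i, Integrable (fun x => A * (h i x * h i x) + B * h i x + C) μ :=
    fun i => (((hint_hh i i).const_mul A).add ((hint_h i).const_mul B)).add (integrable_const C)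
  have Isum1 : (∫ x, (∑ i, (A * (h i x * h i x) + B * h i x + C)) ∂μ)
      = (N:ℝ) * (A + C) := by
    rw [integral_finset_sum _ fun i _ => int_inner i]
    have : ∀ i : Fin N, (∫ x, (A * (h i x * h i x) + B * h i x + C) ∂μ) = A + C := by
      intro i
      have hfA : Integrable (fun x => A * (h i x * h i x)) μ := (hint_hh i i).const_mul A
      have hfB : Integrable (fun x => B * h i x) μ := (hint_h i).const_mul B
      have hfAB : Integrable (fun x => A * (h i x * h i x) + B * h i x) μ := hfA.add hfB
      rw [integral_add hfAB (integrable_const C),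
        integral_add hfA hfB,
        integral_const_mul, integral_const_mul, integral_const, probReal_univ,
        hmean0 i, hij i i]
      simp
    rw [Finset.sum_congr rfl fun i _ => this i, Finset.sum_const, Finset.card_univ,
      Fintype.card_fin, nsmul_eq_mul]
  have Isum2 : (∫ x, (∑ i, ∑ j, h i x * h j x) ∂μ)
      = (N:ℝ) * (1 + ((N:ℝ) - 1) * σ) := by
    rw [integral_finset_sum _ fun i _ =>
      integrable_finset_sum _ fun j _ => hint_hh i j]
    have : ∀ i : Fin N, (∫ x, (∑ j, h i x * h j x) ∂μ) = 1 + ((N:ℝ) - 1) * σ := by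
      intro i
      rw [integral_finset_sum _ fun j _ => hint_hh i j,
        Finset.sum_congr rfl fun j _ => hij i j]
      have : ∑ j : Fin N, (if i = j then (1:ℝ) else σ)
          = ∑ j : Fin N, ((if i = j then (1 - σ : ℝ) else 0) + σ) := by
        refine Finset.sum_congr rfl fun j _ => ?_
        split_ifs <;> ring
      rw [this, Finset.sum_add_distrib, Finset.sum_ite_eq, Finset.sum_const,
        Finset.card_univ, Fintype.card_fin, nsmul_eq_mul]
      simp only [Finset.mem_univ, if_true]
      ring
    rw [Finset.sum_congr rfl fun i _ => this i, Finset.sum_const, Finset.card_univ,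
      Fintype.card_fin, nsmul_eq_mul]
  have IW : (∫ x, W x ∂μ)
      = (N:ℝ) * (A + C) + D * ((N:ℝ) * (1 + ((N:ℝ) - 1) * σ)) := by
    have hI1 : Integrable (fun x => ∑ i, (A * (h i x * h i x) + B * h i x + C)) μ :=
      integrable_finset_sum _ fun i _ => int_inner i
    have hI2 : Integrable (fun x => D * (∑ i, ∑ j, h i x * h j x)) μ :=
      (integrable_finset_sum _ fun i _ =>
        integrable_finset_sum _ fun j _ => hint_hh i j).const_mul D
    rw [integral_congr_ae (Filter.Eventually.of_forall key),
      integral_add hI1 hI2, Isum1, integral_const_mul, Isum2]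
  rw [IW, hA, hC, hD]
  field_simp
  ring
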